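/- Let Γ = ℤ/12 = ⟨σ⟩ and let M₁, M₂ ⊆ ℤ[Γ] be the ℤ-spans of the Γ-orbits of u₁ = 1+σ+σ²+σ³+σ⁴+σ⁵ and u₂ = 1+σ⁷+σ²+σ³+σ⁴+σ⁵ respectively. Then M₂ ⊆ M₁ and the quotient M₁/M₂ is isomorphic to (ℤ/2)². -/

import Mathlib

namespace Stmt9Aux

abbrev G := Multiplicative (ZMod 12)

def s : G := Multiplicative.ofAdd 1

noncomputable def o : G →* MonoidAlgebra ℤ G := MonoidAlgebra.of ℤ G

noncomputable def U1 : MonoidAlgebra ℤ G := o 1 + o s + o (s ^ 2) + o (s ^ 3) + o (s ^ 4) + o (s ^ 5)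

noncomputable def U2 : MonoidAlgebra ℤ G := o 1 + o (s ^ 7) + o (s ^ 2) + o (s ^ 3) + o (s ^ 4) + o (s ^ 5)

noncomputable def M1 : Submodule ℤ (MonoidAlgebra ℤ G) := Submodule.span ℤ {x | ∃ τ : G, x = o τ * U1}

noncomputable def M2 : Submodule ℤ (MonoidAlgebra ℤ G) := Submodule.span ℤ {x | ∃ τ : G, x = o τ * U2}

noncomputable def AA : MonoidAlgebra ℤ G := o 1 * U1
noncomputable def BB : MonoidAlgebra ℤ G := o 1 * U1 - o s * U1

def cv : ZMod 12 → ZMod 2 × ZMod 2 := fun t =>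
  (if t = 1 ∨ t = 2 ∨ t = 4 ∨ t = 11 then 1 else 0, if t = 0 ∨ t = 2 ∨ t = 9 ∨ t = 11 then 1 else 0)

def cc : G → ZMod 2 × ZMod 2 := fun γ => cv (Multiplicative.toAdd γ)

noncomputable def f : MonoidAlgebra ℤ G →ₗ[ℤ] ZMod 2 × ZMod 2 :=
  Finsupp.lsum ℤ (fun γ => LinearMap.toSpanSingleton ℤ _ (cc γ)) ∘ₗ (MonoidAlgebra.coeffLinearEquiv ℤ).toLinearMap

lemma f_of (γ : G) : f (o γ) = cc γ := by
  show f (MonoidAlgebra.of ℤ G γ) = cc γ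
  rw [MonoidAlgebra.of_apply]
  have h : f (MonoidAlgebra.single γ 1) = (LinearMap.toSpanSingleton ℤ (ZMod 2 × ZMod 2) (cc γ)) 1 :=
    Finsupp.lsum_single ℤ (fun γ => LinearMap.toSpanSingleton ℤ (ZMod 2 × ZMod 2) (cc γ)) γ 1
  rw [h, LinearMap.toSpanSingleton_apply, one_smul]

lemma pw1_1 : s * s = s ^ 2 := by decide
lemma pw1_2 : s * s ^ 2 = s ^ 3 := by decide
lemma pw1_3 : s * s ^ 3 = s ^ 4 := by decide
lemma pw1_4 : s * s ^ 4 = s ^ 5 := by decide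
lemma pw1_5 : s * s ^ 5 = s ^ 6 := by decide
lemma pw1_7 : s * s ^ 7 = s ^ 8 := by decide
lemma pw2_1 : s ^ 2 * s = s ^ 3 := by decide
lemma pw2_2 : s ^ 2 * s ^ 2 = s ^ 4 := by decide
lemma pw2_3 : s ^ 2 * s ^ 3 = s ^ 5 := by decide
lemma pw2_4 : s ^ 2 * s ^ 4 = s ^ 6 := by decide
lemma pw2_5 : s ^ 2 * s ^ 5 = s ^ 7 := by decide
lemma pw2_7 : s ^ 2 * s ^ 7 = s ^ 9 := by decide
lemma pw3_1 : s ^ 3 * s = s ^ 4 := by decide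
lemma pw3_2 : s ^ 3 * s ^ 2 = s ^ 5 := by decide
lemma pw3_3 : s ^ 3 * s ^ 3 = s ^ 6 := by decide
lemma pw3_4 : s ^ 3 * s ^ 4 = s ^ 7 := by decide
lemma pw3_5 : s ^ 3 * s ^ 5 = s ^ 8 := by decide
lemma pw3_7 : s ^ 3 * s ^ 7 = s ^ 10 := by decide
lemma pw4_1 : s ^ 4 * s = s ^ 5 := by decide
lemma pw4_2 : s ^ 4 * s ^ 2 = s ^ 6 := by decide
lemma pw4_3 : s ^ 4 * s ^ 3 = s ^ 7 := by decide
lemma pw4_4 : s ^ 4 * s ^ 4 = s ^ 8 := by decide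
lemma pw4_5 : s ^ 4 * s ^ 5 = s ^ 9 := by decide
lemma pw4_7 : s ^ 4 * s ^ 7 = s ^ 11 := by decide
lemma pw5_1 : s ^ 5 * s = s ^ 6 := by decide
lemma pw5_2 : s ^ 5 * s ^ 2 = s ^ 7 := by decide
lemma pw5_3 : s ^ 5 * s ^ 3 = s ^ 8 := by decide
lemma pw5_4 : s ^ 5 * s ^ 4 = s ^ 9 := by decide
lemma pw5_5 : s ^ 5 * s ^ 5 = s ^ 10 := by decide
lemma pw5_7 : s ^ 5 * s ^ 7 = 1 := by decide
lemma pw6_1 : s ^ 6 * s = s ^ 7 := by decide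
lemma pw6_2 : s ^ 6 * s ^ 2 = s ^ 8 := by decide
lemma pw6_3 : s ^ 6 * s ^ 3 = s ^ 9 := by decide
lemma pw6_4 : s ^ 6 * s ^ 4 = s ^ 10 := by decide
lemma pw6_5 : s ^ 6 * s ^ 5 = s ^ 11 := by decide
lemma pw6_7 : s ^ 6 * s ^ 7 = s := by decide
lemma pw7_1 : s ^ 7 * s = s ^ 8 := by decide
lemma pw7_2 : s ^ 7 * s ^ 2 = s ^ 9 := by decide
lemma pw7_3 : s ^ 7 * s ^ 3 = s ^ 10 := by decide
lemma pw7_4 : s ^ 7 * s ^ 4 = s ^ 11 := by decide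
lemma pw7_5 : s ^ 7 * s ^ 5 = 1 := by decide
lemma pw7_7 : s ^ 7 * s ^ 7 = s ^ 2 := by decide
lemma pw8_1 : s ^ 8 * s = s ^ 9 := by decide
lemma pw8_2 : s ^ 8 * s ^ 2 = s ^ 10 := by decide
lemma pw8_3 : s ^ 8 * s ^ 3 = s ^ 11 := by decide
lemma pw8_4 : s ^ 8 * s ^ 4 = 1 := by decide
lemma pw8_5 : s ^ 8 * s ^ 5 = s := by decide
lemma pw8_7 : s ^ 8 * s ^ 7 = s ^ 3 := by decide
lemma pw9_1 : s ^ 9 * s = s ^ 10 := by decide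
lemma pw9_2 : s ^ 9 * s ^ 2 = s ^ 11 := by decide
lemma pw9_3 : s ^ 9 * s ^ 3 = 1 := by decide
lemma pw9_4 : s ^ 9 * s ^ 4 = s := by decide
lemma pw9_5 : s ^ 9 * s ^ 5 = s ^ 2 := by decide
lemma pw9_7 : s ^ 9 * s ^ 7 = s ^ 4 := by decide
lemma pw10_1 : s ^ 10 * s = s ^ 11 := by decide
lemma pw10_2 : s ^ 10 * s ^ 2 = 1 := by decide
lemma pw10_3 : s ^ 10 * s ^ 3 = s := by decide
lemma pw10_4 : s ^ 10 * s ^ 4 = s ^ 2 := by decide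
lemma pw10_5 : s ^ 10 * s ^ 5 = s ^ 3 := by decide
lemma pw10_7 : s ^ 10 * s ^ 7 = s ^ 5 := by decide
lemma pw11_1 : s ^ 11 * s = 1 := by decide
lemma pw11_2 : s ^ 11 * s ^ 2 = s := by decide
lemma pw11_3 : s ^ 11 * s ^ 3 = s ^ 2 := by decide
lemma pw11_4 : s ^ 11 * s ^ 4 = s ^ 3 := by decide
lemma pw11_5 : s ^ 11 * s ^ 5 = s ^ 4 := by decide
lemma pw11_7 : s ^ 11 * s ^ 7 = s ^ 6 := by decide

lemma keyU2 : U2 = U1 - o s * U1 + o (s ^ 2) * U1 := by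
  simp only [U1, U2, mul_add, ← map_mul, one_mul, mul_one, pw1_1, pw1_2, pw1_3, pw1_4, pw1_5, pw1_7, pw2_1, pw2_2, pw2_3, pw2_4, pw2_5, pw2_7, pw3_1, pw3_2, pw3_3, pw3_4, pw3_5, pw3_7, pw4_1, pw4_2, pw4_3, pw4_4, pw4_5, pw4_7, pw5_1, pw5_2, pw5_3, pw5_4, pw5_5, pw5_7, pw6_1, pw6_2, pw6_3, pw6_4, pw6_5, pw6_7, pw7_1, pw7_2, pw7_3, pw7_4, pw7_5, pw7_7, pw8_1, pw8_2, pw8_3, pw8_4, pw8_5, pw8_7, pw9_1, pw9_2, pw9_3, pw9_4, pw9_5, pw9_7, pw10_1, pw10_2, pw10_3, pw10_4, pw10_5, pw10_7, pw11_1, pw11_2, pw11_3, pw11_4, pw11_5, pw11_7]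
  abel

noncomputable def T : Submodule ℤ (MonoidAlgebra ℤ G) := M2 ⊔ Submodule.span ℤ {AA, BB}

lemma memAA : AA ∈ Submodule.span ℤ {AA, BB} := Submodule.subset_span (Set.mem_insert _ _)
lemma memBB : BB ∈ Submodule.span ℤ {AA, BB} := Submodule.subset_span (Set.mem_insert_of_mem _ rfl)

lemma eqq0 : o (1) * U1 = ((1 : ℤ) • AA) := by
  simp only [U1, U2, AA, BB, mul_add, smul_add, smul_sub, ← map_mul, one_mul, mul_one, pw1_1, pw1_2, pw1_3, pw1_4, pw1_5, pw1_7, pw2_1, pw2_2, pw2_3, pw2_4, pw2_5, pw2_7, pw3_1, pw3_2, pw3_3, pw3_4, pw3_5, pw3_7, pw4_1, pw4_2, pw4_3, pw4_4, pw4_5, pw4_7, pw5_1, pw5_2, pw5_3, pw5_4, pw5_5, pw5_7, pw6_1, pw6_2, pw6_3, pw6_4, pw6_5, pw6_7, pw7_1, pw7_2, pw7_3, pw7_4, pw7_5, pw7_7, pw8_1, pw8_2, pw8_3, pw8_4, pw8_5, pw8_7, pw9_1, pw9_2, pw9_3, pw9_4, pw9_5, pw9_7, pw10_1, pw10_2,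 pw10_3, pw10_4, pw10_5, pw10_7, pw11_1, pw11_2, pw11_3, pw11_4, pw11_5, pw11_7]
  abel

lemma memT0 : o (1) * U1 ∈ T := by
  rw [eqq0]
  exact Submodule.mem_sup_right (Submodule.smul_mem _ _ memAA)

lemma eqq1 : o (s) * U1 = ((-1 : ℤ) • (o 1 * U2) + (1 : ℤ) • (o (s ^ 2) * U2) + (1 : ℤ) • (o (s ^ 3) * U2) + (-1 : ℤ) • (o (s ^ 5) * U2)) + ((1 : ℤ) • AA + (1 : ℤ) • BB) := by
  simp only [U1, U2, AA, BB, mul_add, smul_add, smul_sub, ← map_mul, one_mul, mul_one, pw1_1, pw1_2, pw1_3, pw1_4, pw1_5, pw1_7, pw2_1, pw2_2, pw2_3, pw2_4, pw2_5, pw2_7, pw3_1, pw3_2, pw3_3, pw3_4, pw3_5, pw3_7, pw4_1, pw4_2, pw4_3, pw4_4, pw4_5, pw4_7, pw5_1, pw5_2, pw5_3, pw5_4, pw5_5, pw5_7, pw6_1, pw6_2, pw6_3, pw6_4, pw6_5, pw6_7, pw7_1, pw7_2, pw7_3, pw7_4, pw7_5, pw7_7, pw8_1, pw8_2, pw8_3,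 pw8_4, pw8_5, pw8_7, pw9_1, pw9_2, pw9_3, pw9_4, pw9_5, pw9_7, pw10_1, pw10_2, pw10_3, pw10_4, pw10_5, pw10_7, pw11_1, pw11_2, pw11_3, pw11_4, pw11_5, pw11_7]
  abel

lemma memT1 : o (s) * U1 ∈ T := by
  rw [eqq1]
  exact add_mem (Submodule.mem_sup_left (add_mem (add_mem (add_mem (Submodule.smul_mem _ _ (Submodule.subset_span ⟨1, rfl⟩)) (Submodule.smul_mem _ _ (Submodule.subset_span ⟨s ^ 2, rfl⟩))) (Submodule.smul_mem _ _ (Submodule.subset_span ⟨s ^ 3, rfl⟩))) (Submodule.smul_mem _ _ (Submodule.subset_span ⟨s ^ 5, rfl⟩)))) (Submodule.mem_sup_right (add_mem (Submodule.smul_mem _ _ memAA) (Submodule.smul_mem _ _ memBB)))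

lemma eqq2 : o (s ^ 2) * U1 = ((1 : ℤ) • (o (s ^ 2) * U2) + (1 : ℤ) • (o (s ^ 3) * U2) + (-1 : ℤ) • (o (s ^ 5) * U2)) + ((1 : ℤ) • BB) := by
  simp only [U1, U2, AA, BB, mul_add, smul_add, smul_sub, ← map_mul, one_mul, mul_one, pw1_1, pw1_2, pw1_3, pw1_4, pw1_5, pw1_7, pw2_1, pw2_2, pw2_3, pw2_4, pw2_5, pw2_7, pw3_1, pw3_2, pw3_3, pw3_4, pw3_5, pw3_7, pw4_1, pw4_2, pw4_3, pw4_4, pw4_5, pw4_7, pw5_1, pw5_2, pw5_3, pw5_4, pw5_5, pw5_7, pw6_1, pw6_2, pw6_3, pw6_4, pw6_5, pw6_7, pw7_1, pw7_2, pw7_3, pw7_4, pw7_5, pw7_7, pw8_1, pw8_2, pw8_3, pw8_4, pw8_5, pw8_7, pw9_1, pw9_2, pw9_3, pw9_4, pw9_5, pw9_7, pw10_1, pw10_2, pw10_3, pw10_4, pw10_5, pw10_7, pw11_1, pw11_2, pw11_3, pw11_4, pw11_5, pw11_7]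
  abel

lemma memT2 : o (s ^ 2) * U1 ∈ T := by
  rw [eqq2]
  exact add_mem (Submodule.mem_sup_left (add_mem (add_mem (Submodule.smul_mem _ _ (Submodule.subset_span ⟨s ^ 2, rfl⟩)) (Submodule.smul_mem _ _ (Submodule.subset_span ⟨s ^ 3, rfl⟩))) (Submodule.smul_mem _ _ (Submodule.subset_span ⟨s ^ 5, rfl⟩)))) (Submodule.mem_sup_right (Submodule.smul_mem _ _ memBB))

lemma eqq3 : o (s ^ 3) * U1 = ((-1 : ℤ) • (o 1 * U2) + (1 : ℤ) • (o (s ^ 3) * U2) + (1 : ℤ) • (o (s ^ 4) * U2) + (-1 : ℤ) • (o (s ^ 6) * U2)) + ((1 : ℤ) • AA) := by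
  simp only [U1, U2, AA, BB, mul_add, smul_add, smul_sub, ← map_mul, one_mul, mul_one, pw1_1, pw1_2, pw1_3, pw1_4, pw1_5, pw1_7, pw2_1, pw2_2, pw2_3, pw2_4, pw2_5, pw2_7, pw3_1, pw3_2, pw3_3, pw3_4, pw3_5, pw3_7, pw4_1, pw4_2, pw4_3, pw4_4, pw4_5, pw4_7, pw5_1, pw5_2, pw5_3, pw5_4, pw5_5, pw5_7, pw6_1, pw6_2, pw6_3, pw6_4, pw6_5, pw6_7, pw7_1, pw7_2, pw7_3, pw7_4, pw7_5, pw7_7, pw8_1, pw8_2, pw8_3, pw8_4, pw8_5, pw8_7, pw9_1, pw9_2, pw9_3, pw9_4, pw9_5, pw9_7, pw10_1, pw10_2, pw10_3, pw10_4, pw10_5, pw10_7, pw11_1, pw11_2, pw11_3, pw11_4, pw11_5, pw11_7]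
  abel

lemma memT3 : o (s ^ 3) * U1 ∈ T := by
  rw [eqq3]
  exact add_mem (Submodule.mem_sup_left (add_mem (add_mem (add_mem (Submodule.smul_mem _ _ (Submodule.subset_span ⟨1, rfl⟩)) (Submodule.smul_mem _ _ (Submodule.subset_span ⟨s ^ 3, rfl⟩))) (Submodule.smul_mem _ _ (Submodule.subset_span ⟨s ^ 4, rfl⟩))) (Submodule.smul_mem _ _ (Submodule.subset_span ⟨s ^ 6, rfl⟩)))) (Submodule.mem_sup_right (Submodule.smul_mem _ _ memAA))

lemma eqq4 : o (s ^ 4) * U1 = ((-2 : ℤ) • (o 1 * U2) + (1 : ℤ) • (o (s ^ 2) * U2) + (1 : ℤ) • (o (s ^ 3) * U2) + (1 : ℤ) • (o (s ^ 4) * U2) + (-1 : ℤ) • (o (s ^ 6) * U2)) + ((1 : ℤ) • AA + (1 : ℤ) • BB) := by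
  simp only [U1, U2, AA, BB, mul_add, smul_add, smul_sub, ← map_mul, one_mul, mul_one, pw1_1, pw1_2, pw1_3, pw1_4, pw1_5, pw1_7, pw2_1, pw2_2, pw2_3, pw2_4, pw2_5, pw2_7, pw3_1, pw3_2, pw3_3, pw3_4, pw3_5, pw3_7, pw4_1, pw4_2, pw4_3, pw4_4, pw4_5, pw4_7, pw5_1, pw5_2, pw5_3, pw5_4, pw5_5, pw5_7, pw6_1, pw6_2, pw6_3, pw6_4, pw6_5, pw6_7, pw7_1, pw7_2, pw7_3, pw7_4, pw7_5, pw7_7, pw8_1, pw8_2, pw8_3, pw8_4, pw8_5, pw8_7, pw9_1, pw9_2, pw9_3, pw9_4, pw9_5, pw9_7, pw10_1, pw10_2, pw10_3, pw10_4, pw10_5, pw10_7, pw11_1, pw11_2, pw11_3, pw11_4, pw11_5, pw11_7]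
  abel

lemma memT4 : o (s ^ 4) * U1 ∈ T := by
  rw [eqq4]
  exact add_mem (Submodule.mem_sup_left (add_mem (add_mem (add_mem (add_mem (Submodule.smul_mem _ _ (Submodule.subset_span ⟨1, rfl⟩)) (Submodule.smul_mem _ _ (Submodule.subset_span ⟨s ^ 2, rfl⟩))) (Submodule.smul_mem _ _ (Submodule.subset_span ⟨s ^ 3, rfl⟩))) (Submodule.smul_mem _ _ (Submodule.subset_span ⟨s ^ 4, rfl⟩))) (Submodule.smul_mem _ _ (Submodule.subset_span ⟨s ^ 6, rfl⟩)))) (Submodule.mem_sup_right (add_mem (Submodule.smul_mem _ _ memAA) (Submodule.smul_mem _ _ memBB)))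

lemma eqq5 : o (s ^ 5) * U1 = ((-1 : ℤ) • (o 1 * U2) + (1 : ℤ) • (o (s ^ 2) * U2) + (1 : ℤ) • (o (s ^ 3) * U2)) + ((1 : ℤ) • BB) := by
  simp only [U1, U2, AA, BB, mul_add, smul_add, smul_sub, ← map_mul, one_mul, mul_one, pw1_1, pw1_2, pw1_3, pw1_4, pw1_5, pw1_7, pw2_1, pw2_2, pw2_3, pw2_4, pw2_5, pw2_7, pw3_1, pw3_2, pw3_3, pw3_4, pw3_5, pw3_7, pw4_1, pw4_2, pw4_3, pw4_4, pw4_5, pw4_7, pw5_1, pw5_2, pw5_3, pw5_4, pw5_5, pw5_7, pw6_1, pw6_2, pw6_3, pw6_4, pw6_5, pw6_7, pw7_1, pw7_2, pw7_3, pw7_4, pw7_5, pw7_7, pw8_1, pw8_2, pw8_3, pw8_4, pw8_5, pw8_7, pw9_1, pw9_2, pw9_3, pw9_4, pw9_5, pw9_7, pw10_1, pw10_2, pw10_3, pw10_4, pw10_5, pw10_7, pw11_1, pw11_2, pw11_3, pw11_4, pw11_5, pw11_7]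
  abel

lemma memT5 : o (s ^ 5) * U1 ∈ T := by
  rw [eqq5]
  exact add_mem (Submodule.mem_sup_left (add_mem (add_mem (Submodule.smul_mem _ _ (Submodule.subset_span ⟨1, rfl⟩)) (Submodule.smul_mem _ _ (Submodule.subset_span ⟨s ^ 2, rfl⟩))) (Submodule.smul_mem _ _ (Submodule.subset_span ⟨s ^ 3, rfl⟩)))) (Submodule.mem_sup_right (Submodule.smul_mem _ _ memBB))

lemma eqq6 : o (s ^ 6) * U1 = ((-1 : ℤ) • (o 1 * U2) + (-1 : ℤ) • (o s * U2) + (1 : ℤ) • (o (s ^ 3) * U2) + (1 : ℤ) • (o (s ^ 4) * U2)) + ((1 : ℤ) • AA) := by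
  simp only [U1, U2, AA, BB, mul_add, smul_add, smul_sub, ← map_mul, one_mul, mul_one, pw1_1, pw1_2, pw1_3, pw1_4, pw1_5, pw1_7, pw2_1, pw2_2, pw2_3, pw2_4, pw2_5, pw2_7, pw3_1, pw3_2, pw3_3, pw3_4, pw3_5, pw3_7, pw4_1, pw4_2, pw4_3, pw4_4, pw4_5, pw4_7, pw5_1, pw5_2, pw5_3, pw5_4, pw5_5, pw5_7, pw6_1, pw6_2, pw6_3, pw6_4, pw6_5, pw6_7, pw7_1, pw7_2, pw7_3, pw7_4, pw7_5, pw7_7, pw8_1, pw8_2, pw8_3, pw8_4, pw8_5, pw8_7, pw9_1, pw9_2, pw9_3, pw9_4, pw9_5, pw9_7, pw10_1, pw10_2, pw10_3, pw10_4, pw10_5, pw10_7, pw11_1, pw11_2, pw11_3, pw11_4, pw11_5, pw11_7]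
  abel

lemma memT6 : o (s ^ 6) * U1 ∈ T := by
  rw [eqq6]
  exact add_mem (Submodule.mem_sup_left (add_mem (add_mem (add_mem (Submodule.smul_mem _ _ (Submodule.subset_span ⟨1, rfl⟩)) (Submodule.smul_mem _ _ (Submodule.subset_span ⟨s, rfl⟩))) (Submodule.smul_mem _ _ (Submodule.subset_span ⟨s ^ 3, rfl⟩))) (Submodule.smul_mem _ _ (Submodule.subset_span ⟨s ^ 4, rfl⟩)))) (Submodule.mem_sup_right (Submodule.smul_mem _ _ memAA))

lemma eqq7 : o (s ^ 7) * U1 = ((-1 : ℤ) • (o 1 * U2) + (-1 : ℤ) • (o s * U2) + (1 : ℤ) • (o (s ^ 3) * U2) + (1 : ℤ) • (o (s ^ 4) * U2)) + ((1 : ℤ) • AA + (1 : ℤ) • BB) := by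
  simp only [U1, U2, AA, BB, mul_add, smul_add, smul_sub, ← map_mul, one_mul, mul_one, pw1_1, pw1_2, pw1_3, pw1_4, pw1_5, pw1_7, pw2_1, pw2_2, pw2_3, pw2_4, pw2_5, pw2_7, pw3_1, pw3_2, pw3_3, pw3_4, pw3_5, pw3_7, pw4_1, pw4_2, pw4_3, pw4_4, pw4_5, pw4_7, pw5_1, pw5_2, pw5_3, pw5_4, pw5_5, pw5_7, pw6_1, pw6_2, pw6_3, pw6_4, pw6_5, pw6_7, pw7_1, pw7_2, pw7_3, pw7_4, pw7_5, pw7_7, pw8_1, pw8_2, pw8_3, pw8_4, pw8_5, pw8_7, pw9_1, pw9_2, pw9_3, pw9_4, pw9_5, pw9_7, pw10_1, pw10_2, pw10_3, pw10_4, pw10_5, pw10_7, pw11_1, pw11_2, pw11_3, pw11_4, pw11_5, pw11_7]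
  abel

lemma memT7 : o (s ^ 7) * U1 ∈ T := by
  rw [eqq7]
  exact add_mem (Submodule.mem_sup_left (add_mem (add_mem (add_mem (Submodule.smul_mem _ _ (Submodule.subset_span ⟨1, rfl⟩)) (Submodule.smul_mem _ _ (Submodule.subset_span ⟨s, rfl⟩))) (Submodule.smul_mem _ _ (Submodule.subset_span ⟨s ^ 3, rfl⟩))) (Submodule.smul_mem _ _ (Submodule.subset_span ⟨s ^ 4, rfl⟩)))) (Submodule.mem_sup_right (add_mem (Submodule.smul_mem _ _ memAA) (Submodule.smul_mem _ _ memBB)))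

lemma eqq8 : o (s ^ 8) * U1 = ((1 : ℤ) • (o (s ^ 6) * U2)) + ((1 : ℤ) • BB) := by
  simp only [U1, U2, AA, BB, mul_add, smul_add, smul_sub, ← map_mul, one_mul, mul_one, pw1_1, pw1_2, pw1_3, pw1_4, pw1_5, pw1_7, pw2_1, pw2_2, pw2_3, pw2_4, pw2_5, pw2_7, pw3_1, pw3_2, pw3_3, pw3_4, pw3_5, pw3_7, pw4_1, pw4_2, pw4_3, pw4_4, pw4_5, pw4_7, pw5_1, pw5_2, pw5_3, pw5_4, pw5_5, pw5_7, pw6_1, pw6_2, pw6_3, pw6_4, pw6_5, pw6_7, pw7_1, pw7_2, pw7_3, pw7_4, pw7_5, pw7_7, pw8_1, pw8_2, pw8_3, pw8_4, pw8_5, pw8_7, pw9_1, pw9_2, pw9_3, pw9_4, pw9_5, pw9_7, pw10_1, pw10_2, pw10_3, pw10_4, pw10_5, pw10_7, pw11_1, pw11_2, pw11_3, pw11_4, pw11_5, pw11_7]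
  abel

lemma memT8 : o (s ^ 8) * U1 ∈ T := by
  rw [eqq8]
  exact add_mem (Submodule.mem_sup_left (Submodule.smul_mem _ _ (Submodule.subset_span ⟨s ^ 6, rfl⟩))) (Submodule.mem_sup_right (Submodule.smul_mem _ _ memBB))

lemma eqq9 : o (s ^ 9) * U1 = ((-1 : ℤ) • (o s * U2) + (1 : ℤ) • (o (s ^ 6) * U2)) + ((1 : ℤ) • AA) := by
  simp only [U1, U2, AA, BB, mul_add, smul_add, smul_sub, ← map_mul, one_mul, mul_one, pw1_1, pw1_2, pw1_3, pw1_4, pw1_5, pw1_7, pw2_1, pw2_2, pw2_3, pw2_4, pw2_5, pw2_7, pw3_1, pw3_2, pw3_3, pw3_4, pw3_5, pw3_7, pw4_1, pw4_2, pw4_3, pw4_4, pw4_5, pw4_7, pw5_1, pw5_2, pw5_3, pw5_4, pw5_5, pw5_7, pw6_1, pw6_2, pw6_3, pw6_4, pw6_5, pw6_7, pw7_1, pw7_2, pw7_3, pw7_4, pw7_5, pw7_7, pw8_1, pw8_2, pw8_3, pw8_4, pw8_5, pw8_7, pw9_1, pw9_2, pw9_3, pw9_4, pw9_5, pw9_7,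 pw10_1, pw10_2, pw10_3, pw10_4, pw10_5, pw10_7, pw11_1, pw11_2, pw11_3, pw11_4, pw11_5, pw11_7]
  abel

lemma memT9 : o (s ^ 9) * U1 ∈ T := by
  rw [eqq9]
  exact add_mem (Submodule.mem_sup_left (add_mem (Submodule.smul_mem _ _ (Submodule.subset_span ⟨s, rfl⟩)) (Submodule.smul_mem _ _ (Submodule.subset_span ⟨s ^ 6, rfl⟩)))) (Submodule.mem_sup_right (Submodule.smul_mem _ _ memAA))

lemma eqq10 : o (s ^ 10) * U1 = ((-1 : ℤ) • (o s * U2) + (1 : ℤ) • (o (s ^ 3) * U2) + (-1 : ℤ) • (o (s ^ 5) * U2) + (1 : ℤ) • (o (s ^ 6) * U2)) + ((1 : ℤ) • AA + (1 : ℤ) • BB) := by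
  simp only [U1, U2, AA, BB, mul_add, smul_add, smul_sub, ← map_mul, one_mul, mul_one, pw1_1, pw1_2, pw1_3, pw1_4, pw1_5, pw1_7, pw2_1, pw2_2, pw2_3, pw2_4, pw2_5, pw2_7, pw3_1, pw3_2, pw3_3, pw3_4, pw3_5, pw3_7, pw4_1, pw4_2, pw4_3, pw4_4, pw4_5, pw4_7, pw5_1, pw5_2, pw5_3, pw5_4, pw5_5, pw5_7, pw6_1, pw6_2, pw6_3, pw6_4, pw6_5, pw6_7, pw7_1, pw7_2, pw7_3, pw7_4, pw7_5, pw7_7, pw8_1, pw8_2, pw8_3, pw8_4, pw8_5, pw8_7, pw9_1, pw9_2, pw9_3, pw9_4, pw9_5, pw9_7, pw10_1, pw10_2, pw10_3, pw10_4, pw10_5, pw10_7, pw11_1, pw11_2, pw11_3, pw11_4, pw11_5, pw11_7]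
  abel

lemma memT10 : o (s ^ 10) * U1 ∈ T := by
  rw [eqq10]
  exact add_mem (Submodule.mem_sup_left (add_mem (add_mem (add_mem (Submodule.smul_mem _ _ (Submodule.subset_span ⟨s, rfl⟩)) (Submodule.smul_mem _ _ (Submodule.subset_span ⟨s ^ 3, rfl⟩))) (Submodule.smul_mem _ _ (Submodule.subset_span ⟨s ^ 5, rfl⟩))) (Submodule.smul_mem _ _ (Submodule.subset_span ⟨s ^ 6, rfl⟩)))) (Submodule.mem_sup_right (add_mem (Submodule.smul_mem _ _ memAA) (Submodule.smul_mem _ _ memBB)))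

lemma eqq11 : o (s ^ 11) * U1 = ((1 : ℤ) • (o 1 * U2) + (-1 : ℤ) • (o (s ^ 5) * U2) + (1 : ℤ) • (o (s ^ 6) * U2)) + ((1 : ℤ) • BB) := by
  simp only [U1, U2, AA, BB, mul_add, smul_add, smul_sub, ← map_mul, one_mul, mul_one, pw1_1, pw1_2, pw1_3, pw1_4, pw1_5, pw1_7, pw2_1, pw2_2, pw2_3, pw2_4, pw2_5, pw2_7, pw3_1, pw3_2, pw3_3, pw3_4, pw3_5, pw3_7, pw4_1, pw4_2, pw4_3, pw4_4, pw4_5, pw4_7, pw5_1, pw5_2, pw5_3, pw5_4, pw5_5, pw5_7, pw6_1, pw6_2, pw6_3, pw6_4, pw6_5, pw6_7, pw7_1, pw7_2, pw7_3, pw7_4, pw7_5, pw7_7, pw8_1, pw8_2, pw8_3, pw8_4, pw8_5, pw8_7, pw9_1, pw9_2, pw9_3, pw9_4, pw9_5, pw9_7, pw10_1, pw10_2, pw10_3, pw10_4, pw10_5, pw10_7, pw11_1, pw11_2, pw11_3, pw11_4, pw11_5, pw11_7]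
  abel

lemma memT11 : o (s ^ 11) * U1 ∈ T := by
  rw [eqq11]
  exact add_mem (Submodule.mem_sup_left (add_mem (add_mem (Submodule.smul_mem _ _ (Submodule.subset_span ⟨1, rfl⟩)) (Submodule.smul_mem _ _ (Submodule.subset_span ⟨s ^ 5, rfl⟩))) (Submodule.smul_mem _ _ (Submodule.subset_span ⟨s ^ 6, rfl⟩)))) (Submodule.mem_sup_right (Submodule.smul_mem _ _ memBB))

lemma eq2A : (2 : ℤ) • AA = (2 : ℤ) • (o 1 * U2) + (1 : ℤ) • (o s * U2) + (-1 : ℤ) • (o (s ^ 3) * U2) + (-1 : ℤ) • (o (s ^ 4) * U2) + (1 : ℤ) • (o (s ^ 6) * U2) := by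
  simp only [U1, U2, AA, AA, mul_add, smul_add, smul_sub, ← map_mul, one_mul, mul_one, pw1_1, pw1_2, pw1_3, pw1_4, pw1_5, pw1_7, pw2_1, pw2_2, pw2_3, pw2_4, pw2_5, pw2_7, pw3_1, pw3_2, pw3_3, pw3_4, pw3_5, pw3_7, pw4_1, pw4_2, pw4_3, pw4_4, pw4_5, pw4_7, pw5_1, pw5_2, pw5_3, pw5_4, pw5_5, pw5_7, pw6_1, pw6_2, pw6_3, pw6_4, pw6_5, pw6_7, pw7_1, pw7_2, pw7_3, pw7_4, pw7_5, pw7_7, pw8_1, pw8_2, pw8_3, pw8_4, pw8_5, pw8_7, pw9_1, pw9_2, pw9_3, pw9_4, pw9_5, pw9_7, pw10_1, pw10_2, pw10_3, pw10_4, pw10_5, pw10_7, pw11_1, pw11_2, pw11_3, pw11_4, pw11_5, pw11_7]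
  abel

lemma mem2A : (2 : ℤ) • AA ∈ M2 := by
  rw [eq2A]
  exact (add_mem (add_mem (add_mem (add_mem (Submodule.smul_mem _ _ (Submodule.subset_span ⟨1, rfl⟩)) (Submodule.smul_mem _ _ (Submodule.subset_span ⟨s, rfl⟩))) (Submodule.smul_mem _ _ (Submodule.subset_span ⟨s ^ 3, rfl⟩))) (Submodule.smul_mem _ _ (Submodule.subset_span ⟨s ^ 4, rfl⟩))) (Submodule.smul_mem _ _ (Submodule.subset_span ⟨s ^ 6, rfl⟩)))

lemma eq2B : (2 : ℤ) • BB = (1 : ℤ) • (o 1 * U2) + (-1 : ℤ) • (o (s ^ 2) * U2) + (-1 : ℤ) • (o (s ^ 3) * U2) + (1 : ℤ) • (o (s ^ 5) * U2) := by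
  simp only [U1, U2, BB, AA, mul_add, smul_add, smul_sub, ← map_mul, one_mul, mul_one, pw1_1, pw1_2, pw1_3, pw1_4, pw1_5, pw1_7, pw2_1, pw2_2, pw2_3, pw2_4, pw2_5, pw2_7, pw3_1, pw3_2, pw3_3, pw3_4, pw3_5, pw3_7, pw4_1, pw4_2, pw4_3, pw4_4, pw4_5, pw4_7, pw5_1, pw5_2, pw5_3, pw5_4, pw5_5, pw5_7, pw6_1, pw6_2, pw6_3, pw6_4, pw6_5, pw6_7, pw7_1, pw7_2, pw7_3, pw7_4, pw7_5, pw7_7, pw8_1, pw8_2, pw8_3, pw8_4, pw8_5, pw8_7, pw9_1, pw9_2, pw9_3, pw9_4, pw9_5, pw9_7, pw10_1, pw10_2, pw10_3, pw10_4, pw10_5, pw10_7, pw11_1, pw11_2, pw11_3, pw11_4, pw11_5, pw11_7]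
  abel

lemma mem2B : (2 : ℤ) • BB ∈ M2 := by
  rw [eq2B]
  exact (add_mem (add_mem (add_mem (Submodule.smul_mem _ _ (Submodule.subset_span ⟨1, rfl⟩)) (Submodule.smul_mem _ _ (Submodule.subset_span ⟨s ^ 2, rfl⟩))) (Submodule.smul_mem _ _ (Submodule.subset_span ⟨s ^ 3, rfl⟩))) (Submodule.smul_mem _ _ (Submodule.subset_span ⟨s ^ 5, rfl⟩)))
lemma hM2M1 : M2 ≤ M1 := by
  rw [M2, Submodule.span_le]
  rintro x ⟨τ, rfl⟩
  have key : o τ * U2 = o τ * U1 - o (τ * s) * U1 + o (τ * s ^ 2) * U1 := by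
    rw [keyU2]
    simp only [mul_sub, mul_add, ← mul_assoc, ← map_mul]
  have h1 : o τ * U1 ∈ M1 := Submodule.subset_span ⟨τ, rfl⟩
  have h2 : o (τ * s) * U1 ∈ M1 := Submodule.subset_span ⟨τ * s, rfl⟩
  have h3 : o (τ * s ^ 2) * U1 ∈ M1 := Submodule.subset_span ⟨τ * s ^ 2, rfl⟩
  rw [key]
  exact add_mem (sub_mem h1 h2) h3

lemma tau_pow (τ : G) : τ = s ^ (Multiplicative.toAdd τ).val := by
  revert τ; decide

lemma hM1T : M1 ≤ T := by
  rw [M1, Submodule.span_le]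
  rintro x ⟨τ, rfl⟩
  obtain ⟨k, hk, rfl⟩ : ∃ k : ℕ, k < 12 ∧ τ = s ^ k :=
    ⟨(Multiplicative.toAdd τ).val, ZMod.val_lt _, tau_pow τ⟩
  interval_cases k
  · rw [pow_zero]; exact memT0
  · rw [pow_one]; exact memT1
  · exact memT2
  · exact memT3
  · exact memT4
  · exact memT5
  · exact memT6
  · exact memT7
  · exact memT8
  · exact memT9
  · exact memT10
  · exact memT11

lemma ccsum : ∀ τ : G, cc τ + cc (τ * s ^ 7) + cc (τ * s ^ 2) + cc (τ * s ^ 3)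
    + cc (τ * s ^ 4) + cc (τ * s ^ 5) = 0 := by decide

lemma hfM2 : M2 ≤ LinearMap.ker f := by
  rw [M2, Submodule.span_le]
  rintro x ⟨τ, rfl⟩
  have : f (o τ * U2) = 0 := by
    simp only [U2, mul_add, ← map_mul, mul_one, map_add, f_of]
    exact ccsum τ
  simpa [LinearMap.mem_ker] using this

lemma hfA : f AA = (1, 0) := by
  simp only [AA, U1, mul_add, ← map_mul, one_mul, map_add, f_of]
  decide

lemma hfB : f BB = (0, 1) := by
  simp only [BB, U1, mul_add, mul_sub, ← map_mul, one_mul, mul_one, map_add, map_sub, f_of]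
  decide

lemma hker : ∀ v ∈ M1, f v = 0 → v ∈ M2 := by
  intro v hv hf0
  have hvT := hM1T hv
  rw [T, Submodule.mem_sup] at hvT
  obtain ⟨m, hm, w, hw, rfl⟩ := hvT
  rw [Submodule.mem_span_pair] at hw
  obtain ⟨p, q, rfl⟩ := hw
  have hfm : f m = 0 := by simpa [LinearMap.mem_ker] using hfM2 hm
  have hpq : ((p : ZMod 2), (q : ZMod 2)) = (0 : ZMod 2 × ZMod 2) := by
    have := hf0
    rw [map_add, hfm, zero_add, map_add, map_smul, map_smul, hfA, hfB] at this
    rw [← this]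
    ext
    · simp [Prod.smul_fst, zsmul_eq_mul]
    · simp [Prod.smul_snd, zsmul_eq_mul]
  have hp : (2 : ℤ) ∣ p := by
    have := congrArg Prod.fst hpq
    simpa [ZMod.intCast_zmod_eq_zero_iff_dvd] using this
  have hq : (2 : ℤ) ∣ q := by
    have := congrArg Prod.snd hpq
    simpa [ZMod.intCast_zmod_eq_zero_iff_dvd] using this
  obtain ⟨p', rfl⟩ := hp
  obtain ⟨q', rfl⟩ := hq
  have hA' : (2 * p') • AA ∈ M2 := by
    rw [mul_comm, mul_smul]
    exact Submodule.smul_mem _ _ mem2A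
  have hB' : (2 * q') • BB ∈ M2 := by
    rw [mul_comm, mul_smul]
    exact Submodule.smul_mem _ _ mem2B
  exact add_mem hm (add_mem hA' hB')

noncomputable def g : M1 →ₗ[ℤ] ZMod 2 × ZMod 2 := f ∘ₗ M1.subtype

lemma hle : M2.comap M1.subtype ≤ LinearMap.ker g := by
  intro x hx
  have : f (x : MonoidAlgebra ℤ G) = 0 := by
    simpa [LinearMap.mem_ker] using hfM2 hx
  simpa [g, LinearMap.mem_ker] using this

noncomputable def q : (M1 ⧸ (M2.comap M1.subtype)) →ₗ[ℤ] ZMod 2 × ZMod 2 :=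
  Submodule.liftQ _ g hle

lemma memAAM1 : AA ∈ M1 := Submodule.subset_span ⟨1, rfl⟩
lemma memBBM1 : BB ∈ M1 :=
  sub_mem (Submodule.subset_span ⟨1, rfl⟩) (Submodule.subset_span ⟨s, rfl⟩)

lemma q_inj : Function.Injective q := by
  rw [← LinearMap.ker_eq_bot]
  rw [q, Submodule.ker_liftQ_eq_bot]
  intro x hx
  have hfx : f (x : MonoidAlgebra ℤ G) = 0 := by
    simpa [g, LinearMap.mem_ker] using hx
  exact hker _ x.2 hfx

lemma q_surj : Function.Surjective q := by
  intro z
  have h4 : z = (0, 0) ∨ z = (1, 0) ∨ z = (0, 1) ∨ z = (1, 1) := by revert z; decide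
  have hA : q (Submodule.Quotient.mk ⟨AA, memAAM1⟩) = (1, 0) := by
    simpa [q, g] using hfA
  have hB : q (Submodule.Quotient.mk ⟨BB, memBBM1⟩) = (0, 1) := by
    simpa [q, g] using hfB
  rcases h4 with rfl | rfl | rfl | rfl
  · exact ⟨0, map_zero q⟩
  · exact ⟨_, hA⟩
  · exact ⟨_, hB⟩
  · refine ⟨Submodule.Quotient.mk ⟨AA, memAAM1⟩ + Submodule.Quotient.mk ⟨BB, memBBM1⟩, ?_⟩
    rw [map_add, hA, hB]
    decide

noncomputable def E : (M1 ⧸ (M2.comap M1.subtype)) ≃+ (ZMod 2 × ZMod 2) :=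
  (LinearEquiv.ofBijective q ⟨q_inj, q_surj⟩).toAddEquiv

end Stmt9Aux

/-- In the integral group ring of `Γ = ℤ/12 = ⟨σ⟩`, let `M₁` and `M₂` be the ℤ-spans of
the `Γ`-orbits of `u₁ = 1+σ+σ²+σ³+σ⁴+σ⁵` and `u₂ = 1+σ⁷+σ²+σ³+σ⁴+σ⁵` respectively.
Then `M₂ ⊆ M₁` and `M₁/M₂ ≅ (ℤ/2)²`. -/
theorem stmt_9 :
    letI Γ := Multiplicative (ZMod 12)
    letI σ : Γ := Multiplicative.ofAdd 1
    letI o := MonoidAlgebra.of ℤ Γ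
    letI u₁ := o 1 + o σ + o (σ ^ 2) + o (σ ^ 3) + o (σ ^ 4) + o (σ ^ 5)
    letI u₂ := o 1 + o (σ ^ 7) + o (σ ^ 2) + o (σ ^ 3) + o (σ ^ 4) + o (σ ^ 5)
    letI M₁ := Submodule.span ℤ {x | ∃ τ : Γ, x = o τ * u₁}
    letI M₂ := Submodule.span ℤ {x | ∃ τ : Γ, x = o τ * u₂}
    M₂ ≤ M₁ ∧ Nonempty ((↥M₁ ⧸ (M₂.comap M₁.subtype)) ≃+ (ZMod 2 × ZMod 2)) := by
  exact ⟨Stmt9Aux.hM2M1, ⟨Stmt9Aux.E⟩⟩
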